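/- Equip Fin r → ℂ with the sup norm and M_r(ℂ) with the operator norm. Let f : (Fin r → ℂ) → M_r(ℂ) be a ℂ-affine isometric map sending the closed unit polydisc {x : max_j |x_j| ≤ 1} into the closed unit ball of M_r(ℂ). Then f(0) = 0 (so f is linear), and f maps the torus {x : |x_j| = 1 for all j} into the unitary group Uᵣ(ℂ). -/

import Mathlib

open Matrix
open scoped Matrix.Norms.L2Operator InnerProductSpace

lemma norm_attained {r : ℕ} [Nonempty (Fin r)]
    (T : EuclideanSpace ℂ (Fin r) →L[ℂ] EuclideanSpace ℂ (Fin r)) :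
    ∃ v : EuclideanSpace ℂ (Fin r), ‖v‖ = 1 ∧ ‖T v‖ = ‖T‖ := by
  have hne : (Metric.sphere (0 : EuclideanSpace ℂ (Fin r)) 1).Nonempty :=
    NormedSpace.sphere_nonempty.2 zero_le_one
  obtain ⟨v, hv, hmax⟩ := (isCompact_sphere (0 : EuclideanSpace ℂ (Fin r)) 1).exists_isMaxOn hne
    (T.continuous.norm.continuousOn)
  rw [mem_sphere_zero_iff_norm] at hv
  refine ⟨v, hv, le_antisymm (by simpa [hv] using T.le_opNorm v) ?_⟩
  refine T.opNorm_le_bound (norm_nonneg _) fun y => ?_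
  rcases eq_or_ne y 0 with rfl | hy
  · simp
  · have hyn : ‖y‖ ≠ 0 := norm_ne_zero_iff.2 hy
    set u : EuclideanSpace ℂ (Fin r) := ((‖y‖ : ℂ))⁻¹ • y with hu
    have hun : ‖u‖ = 1 := by
      simp [hu, norm_smul, hyn]
    have humem : u ∈ Metric.sphere (0 : EuclideanSpace ℂ (Fin r)) 1 := by
      simpa [mem_sphere_zero_iff_norm] using hun
    have h1 : ‖T u‖ ≤ ‖T v‖ := hmax humem
    have h2 : ‖T u‖ = ‖y‖⁻¹ * ‖T y‖ := by
      simp [hu, _root_.map_smul, norm_smul]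
    rw [h2] at h1
    have := mul_le_mul_of_nonneg_left h1 (norm_nonneg y)
    calc ‖T y‖ = ‖y‖ * (‖y‖⁻¹ * ‖T y‖) := by field_simp
    _ ≤ ‖y‖ * ‖T v‖ := by exact mul_le_mul_of_nonneg_left h1 (norm_nonneg y)
    _ = ‖T v‖ * ‖y‖ := mul_comm _ _



set_option maxHeartbeats 1000000 in
set_option synthInstance.maxHeartbeats 200000 in
/-- Theorem III.5 for `V = Mᵣ(ℂ)`: an affine isometric map from the polydisc
(sup norm on `Fin r → ℂ`) into the matrix ball is linear and maps the torus into
the unitary group. -/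
theorem stmt6 (r : ℕ) (f : (Fin r → ℂ) → Matrix (Fin r) (Fin r) ℂ)
    (ℓ : (Fin r → ℂ) →ₗ[ℂ] Matrix (Fin r) (Fin r) ℂ)
    (b : Matrix (Fin r) (Fin r) ℂ)
    (haff : ∀ x, f x = ℓ x + b)
    (hiso : Isometry f)
    (hpoly : ∀ x : Fin r → ℂ, (∀ j, ‖x j‖ ≤ 1) → ‖f x‖ ≤ 1) :
    f 0 = 0 ∧
    ∀ x : Fin r → ℂ, (∀ j, ‖x j‖ = 1) → (f x)ᴴ * f x = 1 := by
  classical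
  have hℓnorm : ∀ z, ‖ℓ z‖ = ‖z‖ := by
    intro z
    have h1 := hiso.dist_eq z 0
    rw [dist_eq_norm, dist_eq_norm, haff z, haff 0] at h1
    simpa using h1
  have hpoly' : ∀ c : Fin r → ℂ, (∀ j, ‖c j‖ ≤ 1) → ‖ℓ c + b‖ ≤ 1 := by
    intro c hc
    have := hpoly c hc
    rwa [haff] at this
  have key : ∀ x : Fin r → ℂ, (∀ j, ‖x j‖ = 1) →
      b = 0 ∧ (ℓ x)ᴴ * ℓ x = 1 := by
    intro x hx
    rcases isEmpty_or_nonempty (Fin r) with hr | hr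
    · constructor
      · ext i j; exact hr.elim i
      · ext i j; exact hr.elim i
    set φ := Matrix.toEuclideanCLM (𝕜 := ℂ) (n := Fin r) with hφ
    set B := φ b with hB
    set A : Fin r → (EuclideanSpace ℂ (Fin r) →L[ℂ] EuclideanSpace ℂ (Fin r)) :=
      fun j => φ (ℓ (Pi.single j 1 * x)) with hA
    set S := φ (ℓ x) with hSdef
    -- polydisc bound on vectors
    have hcball : ∀ c : Fin r → ℂ, (∀ j, ‖c j‖ ≤ 1) →
        ∀ v : EuclideanSpace ℂ (Fin r), ‖v‖ = 1 → ‖(φ (ℓ (c * x)) + B) v‖ ≤ 1 := by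
      intro c hc v hv
      have hcx : ∀ j, ‖(c * x) j‖ ≤ 1 := by
        intro j
        have : ‖c j * x j‖ = ‖c j‖ * ‖x j‖ := norm_mul _ _
        simpa [Pi.mul_apply, this, hx j] using hc j
      have h1 : ‖ℓ (c * x) + b‖ ≤ 1 := hpoly' _ hcx
      have h2 : ‖φ (ℓ (c * x)) + B‖ ≤ 1 := by
        rw [hB, ← map_add]
        rw [← Matrix.cstar_norm_def]
        exact h1
      calc ‖(φ (ℓ (c * x)) + B) v‖ ≤ ‖φ (ℓ (c * x)) + B‖ * ‖v‖ :=
            ContinuousLinearMap.le_opNorm _ _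
        _ ≤ 1 := by rw [hv]; simpa using h2
    have hsq : ∀ c : Fin r → ℂ, (∀ j, ‖c j‖ ≤ 1) →
        ∀ v : EuclideanSpace ℂ (Fin r), ‖v‖ = 1 →
        ‖(φ (ℓ (c * x))) v‖ ^ 2 + ‖B v‖ ^ 2 ≤ 1 := by
      intro c hc v hv
      have h1 := hcball c hc v hv
      have hcneg : ∀ j, ‖(-c) j‖ ≤ 1 := by
        intro j; simpa using hc j
      have h2 := hcball (-c) hcneg v hv
      have hneg : φ (ℓ ((-c) * x)) = -φ (ℓ (c * x)) := by
        rw [show (-c) * x = -(c * x) by ring, map_neg, map_neg]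
      rw [hneg] at h2
      set a := (φ (ℓ (c * x))) v with ha
      set w := B v with hw
      have e1 : ‖a + w‖ ≤ 1 := by simpa using h1
      have e2 : ‖a - w‖ ≤ 1 := by
        have : (-φ (ℓ (c * x)) + B) v = -(a - w) := by
          simp [ha, hw, ContinuousLinearMap.add_apply]
          abel
        rw [this, norm_neg] at h2
        exact h2
      have hpar := parallelogram_law_with_norm ℂ a w
      nlinarith [norm_nonneg (a + w), norm_nonneg (a - w)]
    -- norms of A j
    have hAnorm : ∀ j, ‖A j‖ = 1 := by
      intro j
      rw [hA]
      rw [← Matrix.cstar_norm_def, hℓnorm]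
      have h1 : ‖(Pi.single j 1 * x : Fin r → ℂ)‖ ≤ 1 := by
        apply pi_norm_le_iff_of_nonneg zero_le_one |>.2
        intro k
        rcases eq_or_ne k j with rfl | hk
        · simp [Pi.single_apply]
          simpa using (hx k).le
        · simp [Pi.single_apply, hk]
      have h2 : (1 : ℝ) ≤ ‖(Pi.single j 1 * x : Fin r → ℂ)‖ := by
        have := norm_le_pi_norm (Pi.single j 1 * x : Fin r → ℂ) j
        simpa [Pi.single_apply, hx j] using this
      linarith
    -- attaining vectors
    have hvex : ∀ j, ∃ v : EuclideanSpace ℂ (Fin r), ‖v‖ = 1 ∧ ‖A j v‖ = 1 := by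
      intro j
      obtain ⟨v, hv1, hv2⟩ := norm_attained (A j)
      exact ⟨v, hv1, by rw [hv2, hAnorm]⟩
    choose v hv1 hv2 using hvex
    -- vanishing of cross terms
    have hvanish : ∀ j k, k ≠ j → A k (v j) = 0 := by
      intro j k hk
      have hc1 : ∀ i, ‖(Pi.single j 1 + Pi.single k 1 : Fin r → ℂ) i‖ ≤ 1 := by
        intro i
        rcases eq_or_ne i j with rfl | hij
        · simp [Pi.single_apply, hk]
        · rcases eq_or_ne i k with rfl | hik
          · simp [Pi.single_apply, hij]
          · simp [Pi.single_apply, hij, hik]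
      have hc2 : ∀ i, ‖(Pi.single j 1 - Pi.single k 1 : Fin r → ℂ) i‖ ≤ 1 := by
        intro i
        rcases eq_or_ne i j with rfl | hij
        · simp [Pi.single_apply, hk]
        · rcases eq_or_ne i k with rfl | hik
          · simp [Pi.single_apply, hij]
          · simp [Pi.single_apply, hij, hik]
      have e1 := hsq _ hc1 (v j) (hv1 j)
      have e2 := hsq _ hc2 (v j) (hv1 j)
      have hadd : φ (ℓ ((Pi.single j 1 + Pi.single k 1) * x)) = A j + A k := by
        rw [hA]
        rw [show (Pi.single j 1 + Pi.single k 1 : Fin r → ℂ) * x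
            = Pi.single j 1 * x + Pi.single k 1 * x by ring, map_add, map_add]
      have hsub : φ (ℓ ((Pi.single j 1 - Pi.single k 1) * x)) = A j - A k := by
        rw [hA]
        rw [show (Pi.single j 1 - Pi.single k 1 : Fin r → ℂ) * x
            = Pi.single j 1 * x - Pi.single k 1 * x by ring, map_sub, map_sub]
      rw [hadd] at e1
      rw [hsub] at e2
      simp only [ContinuousLinearMap.add_apply] at e1
      simp only [ContinuousLinearMap.sub_apply] at e2
      have hpar := parallelogram_law_with_norm ℂ (A j (v j)) (A k (v j))
      have hna : ‖A j (v j)‖ = 1 := hv2 j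
      have hw2 : ‖A k (v j)‖ ^ 2 ≤ 0 := by
        nlinarith [sq_nonneg (‖B (v j)‖), norm_nonneg (A j (v j) + A k (v j)),
          norm_nonneg (A j (v j) - A k (v j))]
      have : ‖A k (v j)‖ = 0 := by nlinarith [norm_nonneg (A k (v j))]
      rwa [norm_eq_zero] at this
    -- S on the v j
    have hxsum : x = ∑ k, Pi.single k (1 : ℂ) * x := by
      rw [← Finset.sum_mul]
      have : (∑ k, Pi.single k (1 : ℂ)) = (1 : Fin r → ℂ) := by
        ext i
        simp [Finset.sum_apply, Pi.single_apply]
      rw [this, one_mul]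
    have hSsum : S = ∑ k, A k := by
      calc S = φ (ℓ (∑ k, Pi.single k (1 : ℂ) * x)) := by rw [hSdef, ← hxsum]
        _ = ∑ k, A k := by rw [map_sum, map_sum]
    have hSv : ∀ j, S (v j) = A j (v j) := by
      intro j
      rw [hSsum]
      rw [ContinuousLinearMap.sum_apply]
      rw [Finset.sum_eq_single j]
      · intro k _ hk
        exact hvanish j k hk
      · intro h; exact absurd (Finset.mem_univ j) h
    have hSvnorm : ∀ j, ‖S (v j)‖ = 1 := fun j => by rw [hSv j]; exact hv2 j
    -- B vanishes on the v j
    have hBv : ∀ j, B (v j) = 0 := by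
      intro j
      have hone : ∀ i, ‖(1 : Fin r → ℂ) i‖ ≤ 1 := by intro i; simp
      have := hsq 1 hone (v j) (hv1 j)
      rw [one_mul] at this
      rw [← hSdef] at this
      rw [hSvnorm j] at this
      have : ‖B (v j)‖ ^ 2 ≤ 0 := by nlinarith
      have : ‖B (v j)‖ = 0 := by nlinarith [norm_nonneg (B (v j))]
      rwa [norm_eq_zero] at this
    -- linear independence and basis
    have hAv0 : ∀ j, A j (v j) ≠ 0 := by
      intro j h
      have := hv2 j
      rw [h] at this
      simp at this
    have hind : LinearIndependent ℂ v := by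
      rw [Fintype.linearIndependent_iff]
      intro g hg j
      have := congrArg (A j) hg
      rw [map_sum, map_zero] at this
      simp_rw [_root_.map_smul] at this
      rw [Finset.sum_eq_single j] at this
      · rcases smul_eq_zero.1 this with h | h
        · exact h
        · exact absurd h (hAv0 j)
      · intro k _ hk
        rw [hvanish k j ?_, smul_zero]
        exact fun hjk => hk (hjk ▸ rfl)
      · intro h; exact absurd (Finset.mem_univ j) h
    have hcard : Fintype.card (Fin r) = Module.finrank ℂ (EuclideanSpace ℂ (Fin r)) := by
      simp [finrank_euclideanSpace_fin]
    let bas : Module.Basis (Fin r) ℂ (EuclideanSpace ℂ (Fin r)) :=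
      basisOfLinearIndependentOfCardEqFinrank hind hcard
    have hbas : ∀ j, bas j = v j := fun j => by
      simp [bas, coe_basisOfLinearIndependentOfCardEqFinrank]
    -- b = 0
    have hB0 : B = 0 := by
      apply ContinuousLinearMap.coe_injective
      apply bas.ext
      intro j
      rw [hbas j]
      simpa using hBv j
    have hb0 : b = 0 := by
      have : φ b = φ 0 := by rw [map_zero]; exact hB0
      exact φ.injective this
    refine ⟨hb0, ?_⟩
    -- unitarity
    have hSle : ‖S‖ ≤ 1 := by
      rw [hSdef, ← Matrix.cstar_norm_def]
      have := hpoly' x (fun j => (hx j).le)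
      rwa [hb0, add_zero] at this
    have hstar : ∀ j, (star S * S) (v j) = v j := by
      intro j
      have hinner : ⟪v j, (star S * S) (v j)⟫_ℂ = 1 := by
        rw [ContinuousLinearMap.mul_apply, ContinuousLinearMap.star_eq_adjoint,
          ContinuousLinearMap.adjoint_inner_right]
        rw [inner_self_eq_norm_sq_to_K, hSvnorm j]
        norm_num
      set u := (star S * S) (v j) with hu
      have hun : ‖u‖ ≤ 1 := by
        rw [hu, ContinuousLinearMap.mul_apply]
        calc ‖star S (S (v j))‖ ≤ ‖star S‖ * ‖S (v j)‖ := ContinuousLinearMap.le_opNorm _ _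
          _ ≤ 1 := by
            have hns : ‖star S‖ = ‖S‖ := by
              rw [ContinuousLinearMap.star_eq_adjoint]
              exact ContinuousLinearMap.adjoint.norm_map S
            rw [hns, hSvnorm j, mul_one]; exact hSle
      have hre : RCLike.re (⟪u, v j⟫_ℂ) = 1 := by
        rw [← inner_conj_symm u (v j), hinner]
        simp
      have hsub := @norm_sub_sq ℂ _ _ _ _ u (v j)
      rw [hre, hv1 j] at hsub
      have : ‖u - v j‖ ^ 2 ≤ 0 := by nlinarith [norm_nonneg u]
      have : ‖u - v j‖ = 0 := by nlinarith [norm_nonneg (u - v j)]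
      have := norm_eq_zero.1 this
      rw [sub_eq_zero] at this
      exact this
    have hSS : star S * S = 1 := by
      apply ContinuousLinearMap.coe_injective
      apply bas.ext
      intro j
      rw [hbas j]
      simpa using hstar j
    have : φ ((ℓ x)ᴴ * ℓ x) = φ 1 := by
      rw [_root_.map_mul, _root_.map_one]
      rw [show φ ((ℓ x)ᴴ) = star S by rw [hSdef, ← map_star]; rfl]
      exact hSS
    exact φ.injective this
  have hb : b = 0 := (key (fun _ => 1) (by simp)).1
  constructor
  · rw [haff, map_zero, hb, add_zero]
  · intro x hx
    have h2 := (key x hx).2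
    rw [haff, hb, add_zero]
    exact h2
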